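/- Let D be a finite set with n ≥ 1 elements, let σ₀, σ₁, σ₂ : D → D be involutions such that the subgroup of permutations they generate acts transitively on D (a Delaney–Dress graph), and let d₀ ∈ D be a chosen initial node. For a bijection f : D → {0, 1, …, n−1} and an element x ∈ D, define key_f(x) to be the lexicographic minimum of the set {(f(z), i) : z ∈ D, i ∈ {0,1,2}, σᵢ(z) = x} ⊆ ℕ × {0,1,2}. Then there exists exactly one bijection f : D → {0, 1, …, n−1} with f(d₀) = 0 such that for all x, y ∈ D with x ≠ d₀ and y ≠ d₀: f(x) < f(y) if and only if key_f(x) is lexicographically smaller than key_f(y). (This is the unique ordered traversal: the breadth-first traversal starting at d₀ in which at each node the incident edges are visited in the order of their colors 0, 1, 2.) -/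

import Mathlib

open scoped Classical

/-- The set of "keys" of an element `x`: the pairs `(f z, i)` (as elements of
`ℕ ×ₗ ℕ`, ordered lexicographically) such that the `i`-neighbor of `z` is `x`. -/
def keySet {D : Type*} {n : ℕ} (σ : Fin 3 → Equiv.Perm D) (f : D ≃ Fin n) (x : D) :
    Set (ℕ ×ₗ ℕ) :=
  {p | ∃ (z : D) (i : Fin 3), σ i z = x ∧ p = toLex (((f z : ℕ)), ((i : ℕ)))}

namespace DDAux

lemma lex_lt_of_fst {p q : ℕ ×ₗ ℕ} (h : (ofLex p).1 < (ofLex q).1) : p < q := by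
  rw [show p = toLex (ofLex p) from rfl, show q = toLex (ofLex q) from rfl, Prod.Lex.lt_iff]
  exact Or.inl h

lemma lex_fst_le {p q : ℕ ×ₗ ℕ} (h : p ≤ q) : (ofLex p).1 ≤ (ofLex q).1 := by
  rw [show p = toLex (ofLex p) from rfl, show q = toLex (ofLex q) from rfl, Prod.Lex.le_iff] at h
  rcases h with h | ⟨h, -⟩
  · exact h.le
  · exact h.le

lemma exists_isLeast {S : Set (ℕ ×ₗ ℕ)} (h : S.Nonempty) : ∃ a, IsLeast S a :=
  ⟨wellFounded_lt.min S h, wellFounded_lt.min_mem S h,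
    fun b hb => not_lt.1 (wellFounded_lt.not_lt_min S hb)⟩

variable {D : Type*}

noncomputable def sig (σ : Fin 3 → Equiv.Perm D) (i : ℕ) : Equiv.Perm D :=
  if h : i < 3 then σ ⟨i, h⟩ else 1

lemma sig_coe (σ : Fin 3 → Equiv.Perm D) (i : Fin 3) : sig σ (i : ℕ) = σ i := by
  simp only [sig, dif_pos i.isLt, Fin.eta]

def pairSet (σ : Fin 3 → Equiv.Perm D) (d₀ : D) (l : List D) : Set (ℕ ×ₗ ℕ) :=
  {p | (ofLex p).1 < l.length ∧ (ofLex p).2 < 3 ∧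
    sig σ (ofLex p).2 (l.getD (ofLex p).1 d₀) ∉ l}

noncomputable def step (σ : Fin 3 → Equiv.Perm D) (d₀ : D) (l : List D) : D :=
  if h : (pairSet σ d₀ l).Nonempty then
    sig σ (ofLex (exists_isLeast h).choose).2 (l.getD (ofLex (exists_isLeast h).choose).1 d₀)
  else d₀

lemma step_spec {σ : Fin 3 → Equiv.Perm D} {d₀ : D} {l : List D}
    (h : (pairSet σ d₀ l).Nonempty) :
    ∃ p, IsLeast (pairSet σ d₀ l) p ∧
      step σ d₀ l = sig σ (ofLex p).2 (l.getD (ofLex p).1 d₀) :=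
  ⟨_, (exists_isLeast h).choose_spec, dif_pos h⟩

noncomputable def travList (σ : Fin 3 → Equiv.Perm D) (d₀ : D) : ℕ → List D
  | 0 => [d₀]
  | k+1 => travList σ d₀ k ++ [step σ d₀ (travList σ d₀ k)]

noncomputable def trav (σ : Fin 3 → Equiv.Perm D) (d₀ : D) (k : ℕ) : D :=
  (travList σ d₀ k).getD k d₀

variable {σ : Fin 3 → Equiv.Perm D} {d₀ : D}

lemma length_travList (k : ℕ) : (travList σ d₀ k).length = k + 1 := by
  induction k with
  | zero => rfl
  | succ k ih => simp [travList, ih]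

lemma travList_prefix {j k : ℕ} (h : j ≤ k) : travList σ d₀ j <+: travList σ d₀ k := by
  induction k with
  | zero => simpa using (Nat.le_zero.1 h) ▸ List.prefix_rfl
  | succ k ih =>
    rcases Nat.le_succ_iff_eq_or_le.1 h with h | h
    · subst h; exact List.prefix_rfl
    · exact (ih h).trans ⟨_, rfl⟩

lemma getD_travList {j k : ℕ} (h : j ≤ k) :
    (travList σ d₀ k).getD j d₀ = trav σ d₀ j := by
  have hlen : j < (travList σ d₀ j).length := by rw [length_travList]; omega
  have hlen' : j < (travList σ d₀ k).length := by rw [length_travList]; omega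
  rw [trav, List.getD_eq_getElem _ _ hlen, List.getD_eq_getElem _ _ hlen']
  exact (List.IsPrefix.getElem (travList_prefix h) hlen).symm

lemma trav_zero : trav σ d₀ 0 = d₀ := rfl

lemma trav_succ (k : ℕ) : trav σ d₀ (k + 1) = step σ d₀ (travList σ d₀ k) := by
  rw [trav, travList]
  have : (travList σ d₀ k).length = k + 1 := length_travList k
  rw [List.getD_eq_getElem]
  · simp [List.getElem_append_right, this]
  · simp [this]

lemma mem_travList {k : ℕ} {x : D} :
    x ∈ travList σ d₀ k ↔ ∃ j ≤ k, trav σ d₀ j = x := by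
  rw [List.mem_iff_getElem]
  constructor
  · rintro ⟨j, hj, rfl⟩
    rw [length_travList] at hj
    refine ⟨j, by omega, ?_⟩
    rw [← getD_travList (by omega : j ≤ k),
      List.getD_eq_getElem _ _ (by rw [length_travList]; omega)]
  · rintro ⟨j, hj, rfl⟩
    refine ⟨j, by rw [length_travList]; omega, ?_⟩
    rw [← getD_travList hj, List.getD_eq_getElem _ _ (by rw [length_travList]; omega)]

lemma closed_univ (σ : Fin 3 → Equiv.Perm D) (hinv : ∀ i, σ i * σ i = 1)
    (htrans : ∀ x y : D, ∃ g ∈ Subgroup.closure (Set.range σ), g x = y)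
    (d₀ : D) (P : Set D) (hd : d₀ ∈ P) (hcl : ∀ (i : Fin 3) z, z ∈ P → σ i z ∈ P) :
    ∀ x, x ∈ P := by
  have key : ∀ g ∈ Subgroup.closure (Set.range σ),
      (∀ y ∈ P, g y ∈ P) ∧ (∀ y ∈ P, g⁻¹ y ∈ P) := by
    intro g hg
    induction hg using Subgroup.closure_induction with
    | mem a ha =>
      obtain ⟨i, rfl⟩ := ha
      have hi : (σ i)⁻¹ = σ i := by rw [inv_eq_iff_mul_eq_one, hinv i]
      exact ⟨fun y hy => hcl i y hy, fun y hy => by rw [hi]; exact hcl i y hy⟩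
    | one => simp
    | mul a b ha hb iha ihb =>
      refine ⟨fun y hy => ?_, fun y hy => ?_⟩
      · rw [Equiv.Perm.mul_apply]; exact iha.1 _ (ihb.1 _ hy)
      · rw [mul_inv_rev, Equiv.Perm.mul_apply]; exact ihb.2 _ (iha.2 _ hy)
    | inv a ha iha =>
      exact ⟨fun y hy => iha.2 y hy, fun y hy => by rw [inv_inv]; exact iha.1 y hy⟩
  intro x
  obtain ⟨g, hg, hgx⟩ := htrans d₀ x
  exact hgx ▸ (key g hg).1 d₀ hd

lemma pairSet_nonempty (hinv : ∀ i, σ i * σ i = 1)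
    (htrans : ∀ x y : D, ∃ g ∈ Subgroup.closure (Set.range σ), g x = y)
    {k : ℕ} (hk : ¬ ∀ x, x ∈ travList σ d₀ k) :
    (pairSet σ d₀ (travList σ d₀ k)).Nonempty := by
  set P : Set D := {x | x ∈ travList σ d₀ k} with hP
  have hd : d₀ ∈ P := mem_travList.2 ⟨0, Nat.zero_le _, trav_zero⟩
  have : ¬ ∀ (i : Fin 3) z, z ∈ P → σ i z ∈ P := by
    intro hcl
    exact hk (closed_univ σ hinv htrans d₀ P hd hcl)
  push_neg at this
  obtain ⟨i, z, hz, hnz⟩ := this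
  obtain ⟨j, hj, hjz⟩ := mem_travList.1 hz
  refine ⟨toLex (j, (i : ℕ)), ?_, i.isLt, ?_⟩
  · show j < (travList σ d₀ k).length
    rw [length_travList]; omega
  · show sig σ (i : ℕ) ((travList σ d₀ k).getD j d₀) ∉ travList σ d₀ k
    rw [getD_travList hj, hjz, sig_coe]
    exact hnz

end DDAux

open DDAux

/-- Let `D` be a finite set with `n ≥ 1` elements, `σ₀, σ₁, σ₂` involutions of `D`
whose generated permutation group acts transitively (a Delaney–Dress graph), and
`d₀ ∈ D` an initial node.  For a bijection `f : D ≃ Fin n` let `key_f(x)` be the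
lexicographic minimum of `{(f z, i) : σᵢ z = x}`.  Then there is exactly one bijection
`f` with `f d₀ = 0` such that for all `x, y ≠ d₀`, `f x < f y` iff
`key_f(x) <ₗₑₓ key_f(y)`: the unique ordered (breadth-first) traversal from `d₀`. -/
theorem exists_unique_ordered_traversal {D : Type*} [Fintype D] {n : ℕ}
    (hn : 1 ≤ n) (hcard : Fintype.card D = n)
    (σ : Fin 3 → Equiv.Perm D) (hinv : ∀ i, σ i * σ i = 1)
    (htrans : ∀ x y : D, ∃ g ∈ Subgroup.closure (Set.range σ), g x = y)
    (d₀ : D) :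
    ∃! f : D ≃ Fin n, f d₀ = ⟨0, hn⟩ ∧
      ∀ x y : D, x ≠ d₀ → y ≠ d₀ →
        (f x < f y ↔
          ∃ kx ky : ℕ ×ₗ ℕ, IsLeast (keySet σ f x) kx ∧ IsLeast (keySet σ f y) ky ∧
            kx < ky) := by
  -- pairSet is nonempty while not everything is visited
  have hPSne : ∀ k, k + 1 < n → (pairSet σ d₀ (travList σ d₀ k)).Nonempty := by
    intro k hk
    refine pairSet_nonempty hinv htrans ?_
    intro hall
    have h1 : (Finset.univ : Finset D) ⊆ (travList σ d₀ k).toFinset :=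
      fun x _ => List.mem_toFinset.2 (hall x)
    have h2 := Finset.card_le_card h1
    rw [Finset.card_univ, hcard] at h2
    have h3 := (travList σ d₀ k).toFinset_card_le
    rw [length_travList] at h3
    omega
  -- nodup
  have hnodup : ∀ k, k < n → (travList σ d₀ k).Nodup := by
    intro k
    induction k with
    | zero => intro _; simp [travList]
    | succ k ih =>
      intro hk
      obtain ⟨p, hpl, hstep⟩ := step_spec (hPSne k hk)
      have hnotmem : step σ d₀ (travList σ d₀ k) ∉ travList σ d₀ k := by
        rw [hstep]; exact hpl.1.2.2
      rw [travList]
      simp only [List.nodup_append, List.nodup_singleton, List.disjoint_singleton]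
      exact ⟨ih (by omega), trivial, fun a ha b hb h => hnotmem (by simp at hb; subst hb; subst h; exact ha)⟩
  have hinj : ∀ j k, j < n → k < n → trav σ d₀ j = trav σ d₀ k → j = k := by
    intro j k hj hk hjk
    have hnd := hnodup (n - 1) (by omega)
    have hj' : j < (travList σ d₀ (n-1)).length := by rw [length_travList]; omega
    have hk' : k < (travList σ d₀ (n-1)).length := by rw [length_travList]; omega
    have e1 : (travList σ d₀ (n-1))[j] = trav σ d₀ j := by
      rw [← getD_travList (by omega : j ≤ n - 1), List.getD_eq_getElem _ _ hj']
    have e2 : (travList σ d₀ (n-1))[k] = trav σ d₀ k := by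
      rw [← getD_travList (by omega : k ≤ n - 1), List.getD_eq_getElem _ _ hk']
    exact List.Nodup.getElem_inj_iff hnd |>.1 (by rw [e1, e2, hjk])
  have hcover : ∀ x : D, ∃ j, j < n ∧ trav σ d₀ j = x := by
    intro x
    have hnd := hnodup (n - 1) (by omega)
    have hcard' : (travList σ d₀ (n-1)).toFinset.card = n := by
      rw [List.toFinset_card_of_nodup hnd, length_travList]; omega
    have : (travList σ d₀ (n-1)).toFinset = Finset.univ :=
      Finset.eq_univ_of_card _ (by rw [hcard', hcard])
    have hx : x ∈ travList σ d₀ (n-1) := by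
      rw [← List.mem_toFinset, this]; exact Finset.mem_univ x
    obtain ⟨j, hj, hjx⟩ := mem_travList.1 hx
    exact ⟨j, by omega, hjx⟩
  -- the bijection
  have hbij : Function.Bijective (fun k : Fin n => trav σ d₀ k) := by
    constructor
    · intro a b hab
      exact Fin.ext (hinj a b a.isLt b.isLt hab)
    · intro x
      obtain ⟨j, hj, hjx⟩ := hcover x
      exact ⟨⟨j, hj⟩, hjx⟩
  set f : D ≃ Fin n := (Equiv.ofBijective _ hbij).symm with hfdef
  have hfsymm : ∀ k : Fin n, f.symm k = trav σ d₀ (k : ℕ) := fun k => rfl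
  have hf : ∀ (j : ℕ) (h : j < n), f (trav σ d₀ j) = ⟨j, h⟩ := by
    intro j h
    rw [show trav σ d₀ j = f.symm ⟨j, h⟩ from rfl, Equiv.apply_symm_apply]
  have hfd : f d₀ = ⟨0, hn⟩ := hf 0 hn
  have hfval : ∀ x : D, trav σ d₀ (f x : ℕ) = x := by
    intro x
    rw [← hfsymm (f x), Equiv.symm_apply_apply]
  -- the key characterization of each step
  have H1 : ∀ m, m + 1 < n → ∃ p, IsLeast (pairSet σ d₀ (travList σ d₀ m)) p ∧
      trav σ d₀ (m+1) = sig σ (ofLex p).2 (trav σ d₀ (ofLex p).1) ∧ (ofLex p).1 ≤ m ∧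
      IsLeast (keySet σ f (trav σ d₀ (m+1))) p := by
    intro m hm
    obtain ⟨p, hpl, hstep⟩ := step_spec (hPSne m hm)
    obtain ⟨hp1, hp2, hp3⟩ := hpl.1
    rw [length_travList] at hp1
    have hq1 : (ofLex p).1 ≤ m := by omega
    have htr : trav σ d₀ (m+1) = sig σ (ofLex p).2 (trav σ d₀ (ofLex p).1) := by
      rw [trav_succ, hstep, getD_travList hq1]
    have hnm : trav σ d₀ (m+1) ∉ travList σ d₀ m := by
      rw [trav_succ, hstep]; exact hp3
    refine ⟨p, hpl, htr, hq1, ?_, ?_⟩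
    · -- p ∈ keySet
      refine ⟨trav σ d₀ (ofLex p).1, ⟨(ofLex p).2, hp2⟩, ?_, ?_⟩
      · rw [← sig_coe σ ⟨(ofLex p).2, hp2⟩]; exact htr.symm
      · have : (f (trav σ d₀ (ofLex p).1) : ℕ) = (ofLex p).1 := by
          rw [hf _ (by omega)]
        rw [this]
        rfl
    · -- lower bound
      rintro q ⟨z, i, hσz, rfl⟩
      by_cases hj : (f z : ℕ) ≤ m
      · refine hpl.2 ⟨?_, ?_, ?_⟩
        · rw [length_travList]; show (f z : ℕ) < m + 1; omega
        · exact i.isLt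
        · show sig σ (i : ℕ) ((travList σ d₀ m).getD (f z : ℕ) d₀) ∉ travList σ d₀ m
          rw [getD_travList hj, hfval, sig_coe, hσz]
          exact hnm
      · apply le_of_lt
        apply lex_lt_of_fst
        show (ofLex p).1 < (f z : ℕ)
        omega
  -- monotonicity of least keys along the traversal
  have H2 : ∀ a b, a < b → a + 1 < n → b + 1 < n →
      ∀ pk pl, IsLeast (keySet σ f (trav σ d₀ (a+1))) pk →
        IsLeast (keySet σ f (trav σ d₀ (b+1))) pl → pk < pl := by
    intro a b hab ha hb pk pl hpk hpl
    obtain ⟨pa, hpaL, hptra, hpa1, hpaK⟩ := H1 a ha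
    obtain ⟨pb, hpbL, hptrb, hpb1, hpbK⟩ := H1 b hb
    have e1 : pk = pa := hpk.unique hpaK
    have e2 : pl = pb := hpl.unique hpbK
    rw [e1, e2]
    by_cases hc : (ofLex pb).1 ≤ a
    · have hmem : pb ∈ pairSet σ d₀ (travList σ d₀ a) := by
        refine ⟨by rw [length_travList]; omega, hpbL.1.2.1, ?_⟩
        show sig σ (ofLex pb).2 ((travList σ d₀ a).getD (ofLex pb).1 d₀) ∉ travList σ d₀ a
        rw [getD_travList hc, ← hptrb, mem_travList]
        rintro ⟨j, hj, hjb⟩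
        have := hinj j (b+1) (by omega) (by omega) hjb
        omega
      have hle : pa ≤ pb := hpaL.2 hmem
      rcases lt_or_eq_of_le hle with h | h
      · exact h
      · exfalso
        have : trav σ d₀ (a+1) = trav σ d₀ (b+1) := by rw [hptra, hptrb, h]
        have := hinj (a+1) (b+1) (by omega) (by omega) this
        omega
    · apply lex_lt_of_fst
      omega
  -- keySet is always nonempty
  have hKne : ∀ (h : D ≃ Fin n) (x : D), (keySet σ h x).Nonempty := by
    intro h x
    refine ⟨toLex ((h (σ 0 x) : ℕ), ((0 : Fin 3) : ℕ)), σ 0 x, 0, ?_, rfl⟩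
    rw [← Equiv.Perm.mul_apply, hinv]
    rfl
  -- the traversal indices of elements ≠ d₀ are nonzero
  have hne0 : ∀ x : D, x ≠ d₀ → (f x : ℕ) ≠ 0 := by
    intro x hx h0
    apply hx
    have : f x = ⟨0, hn⟩ := Fin.ext h0
    rw [← hfval x, this, ← hfd, hfval]
  -- f satisfies the condition
  have hcond : ∀ x y : D, x ≠ d₀ → y ≠ d₀ →
      (f x < f y ↔
        ∃ kx ky : ℕ ×ₗ ℕ, IsLeast (keySet σ f x) kx ∧ IsLeast (keySet σ f y) ky ∧
          kx < ky) := by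
    have fwd : ∀ x y : D, x ≠ d₀ → y ≠ d₀ → f x < f y →
        ∃ kx ky : ℕ ×ₗ ℕ, IsLeast (keySet σ f x) kx ∧ IsLeast (keySet σ f y) ky ∧
          kx < ky := by
      intro x y hx hy hlt
      have hkx0 := hne0 x hx
      have hky0 := hne0 y hy
      have hltv : (f x : ℕ) < (f y : ℕ) := hlt
      set a := (f x : ℕ) - 1 with ha
      set b := (f y : ℕ) - 1 with hb
      have hax : a + 1 = (f x : ℕ) := by omega
      have hby : b + 1 = (f y : ℕ) := by omega
      have han : a + 1 < n := by have := (f y).isLt; omega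
      have hbn : b + 1 < n := by have := (f y).isLt; omega
      obtain ⟨pa, -, -, -, hpaK⟩ := H1 a han
      obtain ⟨pb, -, -, -, hpbK⟩ := H1 b hbn
      rw [hax, hfval] at hpaK
      rw [hby, hfval] at hpbK
      exact ⟨pa, pb, hpaK, hpbK, H2 a b (by omega) han hbn pa pb
        (by rw [hax, hfval]; exact hpaK) (by rw [hby, hfval]; exact hpbK)⟩
    intro x y hx hy
    refine ⟨fwd x y hx hy, ?_⟩
    rintro ⟨kx, ky, hkx, hky, hlt⟩
    rcases lt_trichotomy (f x) (f y) with h | h | h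
    · exact h
    · exfalso
      have : x = y := f.injective (by rw [h])
      subst this
      exact absurd (hkx.unique hky ▸ hlt) (lt_irrefl _)
    · exfalso
      obtain ⟨ky', kx', hky', hkx', hlt'⟩ := fwd y x hy hx h
      rw [hky.unique hky', hkx.unique hkx'] at hlt
      exact absurd (hlt.trans hlt') (lt_irrefl _)
  refine ⟨f, ⟨hfd, hcond⟩, ?_⟩
  -- uniqueness
  rintro g ⟨hg0, hgcond⟩
  -- the least key of any x ≠ d₀ has first coordinate < g x
  have hstar : ∀ x, x ≠ d₀ → ∀ q, IsLeast (keySet σ g x) q → (ofLex q).1 < (g x : ℕ) := by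
    intro x hx q hq
    by_contra hge
    push_neg at hge
    set S : Set D := {y | (g y : ℕ) < (g x : ℕ)} with hS
    have hgx0 : (g x : ℕ) ≠ 0 := by
      intro h0
      exact hx (g.injective (by rw [hg0]; exact Fin.ext h0))
    have hd : d₀ ∈ S := by
      show (g d₀ : ℕ) < (g x : ℕ)
      rw [hg0]
      show 0 < (g x : ℕ)
      omega
    have hcl : ∀ (i : Fin 3) z, z ∈ S → σ i z ∈ S := by
      intro i z hz
      by_cases hy : σ i z = d₀
      · rw [hy]; exact hd
      obtain ⟨ky, hky⟩ := exists_isLeast (hKne g (σ i z))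
      have hmem : toLex ((g z : ℕ), (i : ℕ)) ∈ keySet σ g (σ i z) := ⟨z, i, rfl, rfl⟩
      have h1 : (ofLex ky).1 ≤ (g z : ℕ) := lex_fst_le (hky.2 hmem)
      have hlt : ky < q := lex_lt_of_fst (by
        have : (g z : ℕ) < (g x : ℕ) := hz
        omega)
      exact (hgcond (σ i z) x hy hx).2 ⟨ky, q, hky, hq, hlt⟩
    have hxS : (g x : ℕ) < (g x : ℕ) := closed_univ σ hinv htrans d₀ S hd hcl x
    omega
  -- g agrees with the traversal
  have huniq : ∀ k, ∀ hk : k < n, g.symm ⟨k, hk⟩ = trav σ d₀ k := by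
    intro k
    induction k using Nat.strong_induction_on with
    | _ k ih =>
    intro hk
    match k with
    | 0 =>
      rw [trav_zero, Equiv.symm_apply_eq, hg0]
    | (m+1) =>
      set y := g.symm ⟨m+1, hk⟩ with hy
      have hgy : g y = ⟨m+1, hk⟩ := Equiv.apply_symm_apply g _
      have hynd : y ≠ d₀ := by
        intro h
        rw [h, hg0] at hgy
        exact absurd (congrArg Fin.val hgy) (by simp)
      obtain ⟨q, hq⟩ := exists_isLeast (hKne g y)
      have hq1 : (ofLex q).1 < m + 1 := by
        have := hstar y hynd q hq
        rwa [hgy] at this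
      obtain ⟨z, i, hσz, hqe⟩ := hq.1
      subst hqe
      simp only [ofLex_toLex] at hq1 ⊢
      have hzle : (g z : ℕ) ≤ m := by omega
      have hztrav : trav σ d₀ (g z : ℕ) = z := by
        rw [← ih (g z : ℕ) (by omega) (by omega)]
        congr 1
        exact (Fin.eta _ _).symm ▸ (Equiv.symm_apply_apply g z).symm ▸ rfl
      have hyn : y ∉ travList σ d₀ m := by
        rw [mem_travList]
        rintro ⟨j, hj, hjy⟩
        have : g y = ⟨j, by omega⟩ := by
          rw [← hjy, ← ih j (by omega) (by omega), Equiv.apply_symm_apply]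
        rw [hgy] at this
        have := congrArg Fin.val this
        simp at this
        omega
      have hqmem : toLex ((g z : ℕ), (i : ℕ)) ∈ pairSet σ d₀ (travList σ d₀ m) := by
        refine ⟨by rw [length_travList]; simpa using hq1, i.isLt, ?_⟩
        show sig σ (i : ℕ) ((travList σ d₀ m).getD (g z : ℕ) d₀) ∉ travList σ d₀ m
        rw [getD_travList hzle, hztrav, sig_coe, hσz]
        exact hyn
      obtain ⟨p, hpl, hstep⟩ := step_spec ⟨_, hqmem⟩
      obtain ⟨hp1, hp2, hp3⟩ := hpl.1
      rw [length_travList] at hp1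
      have hp1' : (ofLex p).1 ≤ m := by omega
      set w := trav σ d₀ (m+1) with hw
      have hwdef : w = sig σ (ofLex p).2 (trav σ d₀ (ofLex p).1) := by
        rw [hw, trav_succ, hstep, getD_travList hp1']
      have hwn : w ∉ travList σ d₀ m := by
        rw [hw, trav_succ, hstep]; exact hp3
      have hgw_ge : m + 1 ≤ (g w : ℕ) := by
        by_contra hlt'
        push_neg at hlt'
        apply hwn
        rw [mem_travList]
        refine ⟨(g w : ℕ), by omega, ?_⟩
        rw [← ih (g w : ℕ) (by omega) (by omega)]
        exact (congrArg g.symm (Fin.eta (g w) (by omega))).trans (Equiv.symm_apply_apply g w)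
      by_cases hwy : (g w : ℕ) = m + 1
      · have : g w = ⟨m+1, hk⟩ := Fin.ext hwy
        have hwy' : w = y := by rw [← Equiv.symm_apply_apply g w, this, ← hy]
        exact hy.symm.trans (hwy'.symm.trans hw)
      · exfalso
        have hltgw : g y < g w := by
          show (g y : ℕ) < (g w : ℕ)
          rw [hgy]
          show m + 1 < (g w : ℕ)
          omega
        have hwd : w ≠ d₀ := by
          intro h
          exact hwn (h ▸ mem_travList.2 ⟨0, Nat.zero_le _, trav_zero⟩)
        obtain ⟨ky, kw, hky, hkw, hkk⟩ := (hgcond y w hynd hwd).1 hltgw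
        have hkyq : ky = toLex ((g z : ℕ), (i : ℕ)) := hky.unique hq
        have hpk : p ∈ keySet σ g w := by
          refine ⟨trav σ d₀ (ofLex p).1, ⟨(ofLex p).2, hp2⟩, ?_, ?_⟩
          · rw [← sig_coe σ ⟨(ofLex p).2, hp2⟩]
            exact hwdef.symm
          · have : g (trav σ d₀ (ofLex p).1) = ⟨(ofLex p).1, by omega⟩ := by
              rw [← ih (ofLex p).1 (by omega) (by omega), Equiv.apply_symm_apply]
            rw [this]
            rfl
        have h1 : kw ≤ p := hkw.2 hpk
        have h2 : p ≤ toLex ((g z : ℕ), (i : ℕ)) := hpl.2 hqmem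
        rw [hkyq] at hkk
        exact absurd ((h1.trans h2).trans_lt hkk) (lt_irrefl _)
  -- conclude g = f
  apply Equiv.ext
  intro x
  obtain ⟨j, hj, hjx⟩ := hcover x
  have h1 : g x = ⟨j, hj⟩ := by
    rw [← hjx, ← huniq j hj, Equiv.apply_symm_apply]
  rw [h1, ← hjx, hf j hj]
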